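/- For every integer n ≥ 2 there exists ε > 0 such that for all real t with 0 < t < ε, the matrix X(t) := ((I − S)ᵀ·(I − S))^{−1}·((I + t·S)·(I + t·S)ᵀ)^{n−1} is totally positive. -/

import Mathlib

open Matrix

noncomputable section

/-- The n×n shift matrix: S_{i,j} = 1 if j = i + 1 (1-based) and 0 otherwise. -/
def shiftM (n : ℕ) : Matrix (Fin n) (Fin n) ℝ :=
  Matrix.of fun i j => if (i : ℕ) + 1 = (j : ℕ) then 1 else 0

/-- A real square matrix is totally nonnegative if every minor (determinant of a
square submatrix given by strictly increasing row and column selections) is ≥ 0. -/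
def TotallyNonneg {n : ℕ} (A : Matrix (Fin n) (Fin n) ℝ) : Prop :=
  ∀ (k : ℕ) (r c : Fin k → Fin n), StrictMono r → StrictMono c →
    0 ≤ (A.submatrix r c).det

/-- A real square matrix is totally positive if every minor is > 0. -/
def TotallyPos {n : ℕ} (A : Matrix (Fin n) (Fin n) ℝ) : Prop :=
  ∀ (k : ℕ) (r c : Fin k → Fin n), StrictMono r → StrictMono c →
    0 < (A.submatrix r c).det

open Finset


def monos (k n : ℕ) : Finset (Fin k → Fin n) :=
  @Finset.filter _ (fun f => StrictMono f) (Classical.decPred _) Finset.univ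

lemma mem_monos {k n : ℕ} {f : Fin k → Fin n} : f ∈ monos k n ↔ StrictMono f := by
  simp [monos]

lemma sum_inj_eq {k n : ℕ} (g : (Fin k → Fin n) → ℝ) :
    ∑ p ∈ Finset.univ.filter (fun p => Function.Injective p), g p
      = ∑ f ∈ monos k n, ∑ τ : Equiv.Perm (Fin k), g (f ∘ τ) := by
  have h1 : ∀ f ∈ monos k n, ∑ τ : Equiv.Perm (Fin k), g (f ∘ τ)
      = ∑ τ ∈ (Finset.univ : Finset (Equiv.Perm (Fin k))), g (f ∘ τ) := fun _ _ => rfl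
  rw [Finset.sum_congr rfl h1, ← Finset.sum_product']
  symm
  refine Finset.sum_bij (fun x _ => x.1 ∘ x.2) ?_ ?_ ?_ ?_
  · rintro ⟨f, τ⟩ hx
    obtain ⟨hx1, _⟩ := Finset.mem_product.mp hx
    have hf : StrictMono f := mem_monos.mp hx1
    simp only [Finset.mem_filter, Finset.mem_univ, true_and]
    exact hf.injective.comp τ.injective
  · rintro ⟨f₁, τ₁⟩ h₁ ⟨f₂, τ₂⟩ h₂ h
    have hf₁ : StrictMono f₁ := mem_monos.mp (Finset.mem_product.mp h₁).1
    have hf₂ : StrictMono f₂ := mem_monos.mp (Finset.mem_product.mp h₂).1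
    have h' : f₁ ∘ ⇑τ₁ = f₂ ∘ ⇑τ₂ := h
    have hrange : Set.range f₁ = Set.range f₂ := by
      rw [← τ₁.surjective.range_comp f₁, h', τ₂.surjective.range_comp f₂]
    have hr : f₁ = f₂ :=
      (@StrictMono.range_inj (Fin k) (Fin n) _ _ Finite.to_wellFoundedLT f₁ f₂ hf₁ hf₂).mp hrange
    subst hr
    have hτ : τ₁ = τ₂ := by
      ext i
      have := congrFun h' i
      simp only [Function.comp_apply] at this
      exact congrArg Fin.val (hf₁.injective this)
    rw [hτ]
  · intro p hp
    have hpinj : Function.Injective p := (Finset.mem_filter.mp hp).2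
    set s : Finset (Fin n) := Finset.univ.image p with hs
    have hcard : s.card = k := by
      rw [hs, Finset.card_image_of_injective _ hpinj, Finset.card_univ, Fintype.card_fin]
    set f : Fin k → Fin n := ⇑(s.orderEmbOfFin hcard) with hfdef
    have hf : StrictMono f := (s.orderEmbOfFin hcard).strictMono
    have hex : ∀ i, ∃ j, f j = p i := by
      intro i
      have h2 : p i ∈ s := Finset.mem_image_of_mem p (Finset.mem_univ i)
      have h3 : (p i : Fin n) ∈ (↑s : Set (Fin n)) := h2
      rw [← Finset.range_orderEmbOfFin s hcard] at h3
      exact h3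
    choose τ0 hτ0 using hex
    have hτ0inj : Function.Injective τ0 := by
      intro a b hab
      apply hpinj
      rw [← hτ0 a, ← hτ0 b, hab]
    refine ⟨⟨f, Equiv.ofBijective τ0 (Finite.injective_iff_bijective.mp hτ0inj)⟩, ?_, ?_⟩
    · exact Finset.mem_product.mpr ⟨mem_monos.mpr hf, Finset.mem_univ _⟩
    · funext i
      exact hτ0 i
  · intro x hx
    rfl

theorem cauchy_binet {k n : ℕ} (A : Matrix (Fin k) (Fin n) ℝ) (B : Matrix (Fin n) (Fin k) ℝ) :
    (A * B).det = ∑ f ∈ monos k n, (A.submatrix id f).det * (B.submatrix f id).det := by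
  have step1 : (A * B).det
      = ∑ p : Fin k → Fin n, (A.submatrix id p).det * ∏ i, B (p i) i := by
    calc (A * B).det
        = ∑ p : Fin k → Fin n, ∑ σ : Equiv.Perm (Fin k),
            ((Equiv.Perm.sign σ : ℤ) : ℝ) * ∏ i, A (σ i) (p i) * B (p i) i := by
          simp only [det_apply', mul_apply, Finset.prod_univ_sum, Finset.mul_sum,
            Fintype.piFinset_univ]
          rw [Finset.sum_comm]
      _ = _ := by
          refine Finset.sum_congr rfl fun p _ => ?_
          rw [det_apply', Finset.sum_mul]
          refine Finset.sum_congr rfl fun σ _ => ?_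
          rw [Finset.prod_mul_distrib]
          simp only [submatrix_apply, id_eq]
          ring
  rw [step1]
  have step2 : ∑ p : Fin k → Fin n, (A.submatrix id p).det * ∏ i, B (p i) i
      = ∑ p ∈ Finset.univ.filter (fun p => Function.Injective p),
          (A.submatrix id p).det * ∏ i, B (p i) i := by
    symm
    refine Finset.sum_subset (Finset.filter_subset _ _) fun p _ hp => ?_
    have hpni : ¬ Function.Injective p := by
      intro hinj
      exact hp (Finset.mem_filter.mpr ⟨Finset.mem_univ _, hinj⟩)
    rw [Function.not_injective_iff] at hpni
    obtain ⟨i, j, hpij, hij⟩ := hpni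
    have : (A.submatrix id p).det = 0 :=
      det_zero_of_column_eq hij fun a => by simp [hpij]
    rw [this, zero_mul]
  rw [step2, sum_inj_eq]
  refine Finset.sum_congr rfl fun f hf => ?_
  rw [det_apply' (B.submatrix f id), Finset.mul_sum]
  refine Finset.sum_congr rfl fun τ _ => ?_
  have hsub : A.submatrix id (f ∘ τ) = (A.submatrix id f).submatrix id ⇑τ := by
    rw [submatrix_submatrix, Function.comp_id]
  rw [hsub, det_permute' τ (A.submatrix id f)]
  simp only [submatrix_apply, id_eq, Function.comp_apply]
  ring
lemma det_submatrix_mul {k n : ℕ} (A B : Matrix (Fin n) (Fin n) ℝ) (r c : Fin k → Fin n) :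
    ((A * B).submatrix r c).det
      = ∑ f ∈ monos k n, (A.submatrix r f).det * (B.submatrix f c).det := by
  rw [Matrix.submatrix_mul A B r id c Function.bijective_id, cauchy_binet]
  refine Finset.sum_congr rfl fun f _ => ?_
  rw [submatrix_submatrix, submatrix_submatrix, Function.comp_id, Function.id_comp, Function.comp_id]

lemma TotallyNonneg.mul {n : ℕ} {A B : Matrix (Fin n) (Fin n) ℝ}
    (hA : TotallyNonneg A) (hB : TotallyNonneg B) : TotallyNonneg (A * B) := by
  intro k r c hr hc
  rw [det_submatrix_mul]
  refine Finset.sum_nonneg fun f hf => ?_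
  exact mul_nonneg (hA k r f hr (mem_monos.mp hf)) (hB k f c (mem_monos.mp hf) hc)

lemma det_submatrix_mul_ge {k n : ℕ} {A B : Matrix (Fin n) (Fin n) ℝ}
    (hA : TotallyNonneg A) (hB : TotallyNonneg B) {r c f : Fin k → Fin n}
    (hr : StrictMono r) (hc : StrictMono c) (hf : StrictMono f) :
    (A.submatrix r f).det * (B.submatrix f c).det ≤ ((A * B).submatrix r c).det := by
  rw [det_submatrix_mul]
  refine Finset.single_le_sum (f := fun f => (A.submatrix r f).det * (B.submatrix f c).det)
    (fun g hg => ?_) (mem_monos.mpr hf)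
  exact mul_nonneg (hA k r g hr (mem_monos.mp hg)) (hB k g c (mem_monos.mp hg) hc)

lemma TotallyNonneg.transpose {n : ℕ} {A : Matrix (Fin n) (Fin n) ℝ}
    (hA : TotallyNonneg A) : TotallyNonneg Aᵀ := by
  intro k r c hr hc
  have : (Aᵀ.submatrix r c) = (A.submatrix c r)ᵀ := by
    rw [transpose_submatrix]
  rw [this, det_transpose]
  exact hA k c r hc hr

lemma strictMono_gap {k : ℕ} {p : Fin k → ℕ} (hsm : StrictMono p) :
    ∀ (d : ℕ) (i j : Fin k), (j : ℕ) = (i : ℕ) + d → p i + d ≤ p j := by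
  intro d
  induction d with
  | zero =>
    intro i j h
    have : i = j := Fin.ext (by omega)
    subst this; omega
  | succ d ih =>
    intro i j h
    have hj' : (i : ℕ) + d < k := by omega
    set j' : Fin k := ⟨(i : ℕ) + d, hj'⟩ with hj'def
    have h1 : p i + d ≤ p j' := ih i j' rfl
    have h2 : p j' < p j := hsm (by rw [Fin.lt_def]; simp [hj'def]; omega)
    omega

lemma det_thresh {k : ℕ} (p : Fin k → ℕ) (hp : Monotone p)
    (N : Matrix (Fin k) (Fin k) ℝ) (hN : ∀ i j, N i j = if p i ≤ (j : ℕ) then 1 else 0) :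
    0 ≤ N.det := by
  rcases Nat.eq_zero_or_pos k with hk | hk
  · subst hk
    simp [Matrix.det_isEmpty]
  by_cases hinj : Function.Injective p
  · have hsm : StrictMono p := hp.strictMono_of_injective hinj
    by_cases h0 : 0 < p ⟨0, hk⟩
    · have : N.det = 0 := by
        refine det_eq_zero_of_column_eq_zero ⟨0, hk⟩ fun i => ?_
        rw [hN, if_neg]
        have := hp (show (⟨0, hk⟩ : Fin k) ≤ i from Fin.mk_le_of_le_val (by omega))
        simpa using by omega
      rw [this]
    · by_cases hlast : k ≤ p ⟨k - 1, by omega⟩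
      · have : N.det = 0 := by
          refine det_eq_zero_of_row_eq_zero ⟨k - 1, by omega⟩ fun j => ?_
          rw [hN, if_neg]
          have := j.isLt
          omega
        rw [this]
      · have hid : ∀ i : Fin k, p i = (i : ℕ) := by
          intro i
          have h1 : p ⟨0, hk⟩ + (i : ℕ) ≤ p i := strictMono_gap hsm (i : ℕ) ⟨0, hk⟩ i (by simp)
          have h2 : p i + ((k - 1) - (i : ℕ)) ≤ p ⟨k - 1, by omega⟩ := by
            refine strictMono_gap hsm _ i ⟨k - 1, by omega⟩ ?_
            have := i.isLt
            simp; omega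
          have := i.isLt
          omega
        have htri : N.det = ∏ i, N i i := by
          refine Matrix.det_of_upperTriangular ?_
          intro i j hij
          rw [hN, if_neg]
          rw [hid]
          exact by simpa using hij
        rw [htri]
        refine Finset.prod_nonneg fun i _ => ?_
        rw [hN]
        split <;> norm_num
  · rw [Function.not_injective_iff] at hinj
    obtain ⟨i, j, hpij, hij⟩ := hinj
    have : N.det = 0 := by
      refine det_zero_of_row_eq hij (funext fun a => ?_)
      rw [hN, hN, hpij]
    rw [this]

def Umat (n : ℕ) : Matrix (Fin n) (Fin n) ℝ :=
  Matrix.of fun i j => if (i : ℕ) ≤ (j : ℕ) then 1 else 0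

lemma Umat_TN (n : ℕ) : TotallyNonneg (Umat n) := by
  intro k r c hr hc
  set p : Fin k → ℕ := fun i => (Finset.univ.filter fun j : Fin k => (c j : ℕ) < (r i : ℕ)).card
    with hpdef
  have hiff : ∀ i j : Fin k, ((r i : ℕ) ≤ (c j : ℕ)) ↔ p i ≤ (j : ℕ) := by
    intro i j
    constructor
    · intro h
      have hsub : (Finset.univ.filter fun j' : Fin k => (c j' : ℕ) < (r i : ℕ))
          ⊆ Finset.Iio j := by
        intro j' hj'
        have h1 : (c j' : ℕ) < (r i : ℕ) := (Finset.mem_filter.mp hj').2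
        have h2 : c j' < c j := by
          rw [Fin.lt_def]; omega
        exact Finset.mem_Iio.mpr (hc.lt_iff_lt.mp h2)
      have h4 := Finset.card_le_card hsub
      rw [Fin.card_Iio] at h4
      exact h4
    · intro h
      by_contra hcon
      push_neg at hcon
      have hsub : Finset.Iic j ⊆ (Finset.univ.filter fun j' : Fin k => (c j' : ℕ) < (r i : ℕ)) := by
        intro j' hj'
        refine Finset.mem_filter.mpr ⟨Finset.mem_univ _, ?_⟩
        have : c j' ≤ c j := hc.monotone (Finset.mem_Iic.mp hj')
        rw [Fin.le_def] at this
        omega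
      have := Finset.card_le_card hsub
      rw [Fin.card_Iic] at this
      have h3 : (j : ℕ) + 1 ≤ p i := this
      omega
  have hpmono : Monotone p := by
    intro i i' hii'
    refine Finset.card_le_card ?_
    intro j hj
    refine Finset.mem_filter.mpr ⟨Finset.mem_univ _, ?_⟩
    have h1 : (c j : ℕ) < (r i : ℕ) := (Finset.mem_filter.mp hj).2
    have h2 : r i ≤ r i' := hr.monotone hii'
    rw [Fin.le_def] at h2
    omega
  refine det_thresh p hpmono _ fun i j => ?_
  simp only [submatrix_apply, Umat, Matrix.of_apply]
  exact if_congr (hiff i j) rfl rfl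

lemma Umat_principal (n k : ℕ) (r : Fin k → Fin n) (hr : StrictMono r) :
    ((Umat n).submatrix r r).det = 1 := by
  have htri : ((Umat n).submatrix r r).det = ∏ i, (Umat n) (r i) (r i) := by
    refine Matrix.det_of_upperTriangular ?_
    intro i j hij
    have : r j < r i := hr (by simpa using hij)
    rw [Fin.lt_def] at this
    simp only [submatrix_apply, Umat, Matrix.of_apply]
    rw [if_neg (by omega)]
  rw [htri]
  refine Finset.prod_eq_one fun i _ => ?_
  simp [Umat]

lemma coe_strictMono {k n : ℕ} {r : Fin k → Fin n} (hr : StrictMono r) :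
    StrictMono (fun i => (r i : ℕ)) := fun a b h => by
  have := hr h
  rwa [Fin.lt_def] at this

lemma bidiag_det {n : ℕ} (W : Matrix (Fin n) (Fin n) ℝ)
    (hz : ∀ i j : Fin n, (j : ℕ) ≠ (i : ℕ) → (j : ℕ) ≠ (i : ℕ) + 1 → W i j = 0)
    (hnn : ∀ i j, 0 ≤ W i j) :
    ∀ (k : ℕ) (r c : Fin k → Fin n), StrictMono r → StrictMono c →
      0 ≤ (W.submatrix r c).det ∧
      ((∀ j, (c j : ℕ) = (r j : ℕ) ∨ (c j : ℕ) = (r j : ℕ) + 1) →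
        (W.submatrix r c).det = ∏ j, W (r j) (c j)) := by
  intro k
  induction k with
  | zero =>
    intro r c _ _
    constructor
    · simp [Matrix.det_isEmpty]
    · intro _
      simp [Matrix.det_isEmpty]
  | succ k ih =>
    intro r c hr hc
    have hrgap : ∀ i : Fin (k + 1), (r 0 : ℕ) + (i : ℕ) ≤ (r i : ℕ) := fun i =>
      strictMono_gap (coe_strictMono hr) (i : ℕ) 0 i (by simp)
    have hcgap : ∀ i : Fin (k + 1), (c 0 : ℕ) + (i : ℕ) ≤ (c i : ℕ) := fun i =>
      strictMono_gap (coe_strictMono hc) (i : ℕ) 0 i (by simp)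
    by_cases hc0 : (c 0 : ℕ) < (r 0 : ℕ)
    · have hdet : (W.submatrix r c).det = 0 := by
        refine det_eq_zero_of_column_eq_zero 0 fun i => ?_
        have h1 := hrgap i
        exact hz (r i) (c 0) (by omega) (by omega)
      refine ⟨by rw [hdet], fun hal => ?_⟩
      have := hal 0
      omega
    · by_cases hc0' : (r 0 : ℕ) + 1 < (c 0 : ℕ)
      · have hdet : (W.submatrix r c).det = 0 := by
          refine det_eq_zero_of_row_eq_zero 0 fun j => ?_
          have h1 := hcgap j
          exact hz (r 0) (c j) (by omega) (by omega)
        refine ⟨by rw [hdet], fun hal => ?_⟩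
        have := hal 0
        omega
      · have hrsucc : StrictMono (r ∘ Fin.succ) :=
          fun a b h => hr (Fin.succ_lt_succ_iff.mpr h)
        have hcsucc : StrictMono (c ∘ Fin.succ) :=
          fun a b h => hc (Fin.succ_lt_succ_iff.mpr h)
        have hkey : (W.submatrix r c).det
            = W (r 0) (c 0) * ((W.submatrix (r ∘ Fin.succ) (c ∘ Fin.succ)).det) := by
          rw [det_succ_column_zero]
          rw [Finset.sum_eq_single 0]
          · simp only [Fin.val_zero, pow_zero, one_mul, submatrix_apply, Fin.succAbove_zero,
              submatrix_submatrix]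
          · intro i _ hi0
            have hipos : 0 < i := Fin.pos_of_ne_zero hi0
            have hipos' : 0 < (i : ℕ) := hipos
            have hk : 0 < k := by
              have := i.isLt
              omega
            by_cases hent : (c 0 : ℕ) = (r i : ℕ)
            · have hcof : ((W.submatrix r c).submatrix i.succAbove Fin.succ).det = 0 := by
                refine det_eq_zero_of_row_eq_zero ⟨0, hk⟩ fun j => ?_
                have hsa : i.succAbove ⟨0, hk⟩ = 0 := by
                  rw [Fin.succAbove_of_castSucc_lt _ _ (by exact hipos)]
                  rfl
                simp only [submatrix_apply, hsa]
                have h1 := hrgap i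
                have h2 : (c 0 : ℕ) + ((Fin.succ j : Fin (k+1)) : ℕ) ≤ (c (Fin.succ j) : ℕ) :=
                  hcgap (Fin.succ j)
                have h3 : 0 < ((Fin.succ j : Fin (k+1)) : ℕ) := by simp
                exact hz (r 0) (c (Fin.succ j)) (by omega) (by omega)
              rw [hcof]
              ring
            · have hent' : (W.submatrix r c) i 0 = 0 := by
                have h1 := hrgap i
                exact hz (r i) (c 0) hent (by omega)
              rw [hent']
              ring
          · intro h
            exact absurd (Finset.mem_univ _) h
        have ihs := ih (r ∘ Fin.succ) (c ∘ Fin.succ) hrsucc hcsucc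
        constructor
        · rw [hkey]
          exact mul_nonneg (hnn _ _) ihs.1
        · intro hal
          rw [hkey, ihs.2 (fun j => hal (Fin.succ j)), Fin.prod_univ_succ]
          rfl

section PB
variable {n : ℕ} {t : ℝ}

lemma Pm_zero (i j : Fin n) (h1 : (j : ℕ) ≠ (i : ℕ)) (h2 : (j : ℕ) ≠ (i : ℕ) + 1) :
    (1 + t • shiftM n) i j = 0 := by
  simp only [Matrix.add_apply, Matrix.smul_apply, Matrix.one_apply, shiftM, Matrix.of_apply,
    smul_eq_mul]
  rw [if_neg (fun h => h1 (by rw [h])), if_neg (fun h => h2 h.symm)]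
  ring

lemma Pm_diag (i : Fin n) : (1 + t • shiftM n) i i = 1 := by
  simp only [Matrix.add_apply, Matrix.smul_apply, Matrix.one_apply, shiftM, Matrix.of_apply,
    smul_eq_mul]
  rw [if_neg (show ¬((i:ℕ) + 1 = (i:ℕ)) by omega)]
  simp

lemma Pm_super (i j : Fin n) (h : (j : ℕ) = (i : ℕ) + 1) : (1 + t • shiftM n) i j = t := by
  simp only [Matrix.add_apply, Matrix.smul_apply, Matrix.one_apply, shiftM, Matrix.of_apply,
    smul_eq_mul]
  rw [if_neg (by intro hh; rw [hh] at h; omega), if_pos h.symm]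
  ring

lemma Pm_nonneg (ht : 0 < t) (i j : Fin n) : 0 ≤ (1 + t • shiftM n) i j := by
  by_cases h1 : (j : ℕ) = (i : ℕ)
  · rw [show j = i from Fin.ext h1, Pm_diag]; norm_num
  · by_cases h2 : (j : ℕ) = (i : ℕ) + 1
    · rw [Pm_super i j h2]; exact ht.le
    · rw [Pm_zero i j h1 h2]

lemma Pm_TN (ht : 0 < t) : TotallyNonneg (1 + t • shiftM n) :=
  fun k r c hr hc => (bidiag_det _ Pm_zero (Pm_nonneg ht) k r c hr hc).1

lemma Pm_aligned_pos (ht : 0 < t) {k : ℕ} {r c : Fin k → Fin n}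
    (hr : StrictMono r) (hc : StrictMono c)
    (hal : ∀ j, (c j : ℕ) = (r j : ℕ) ∨ (c j : ℕ) = (r j : ℕ) + 1) :
    0 < (((1 + t • shiftM n)).submatrix r c).det := by
  rw [(bidiag_det _ Pm_zero (Pm_nonneg ht) k r c hr hc).2 hal]
  refine Finset.prod_pos fun j _ => ?_
  rcases hal j with h | h
  · rw [show c j = r j from Fin.ext h, Pm_diag]; norm_num
  · rw [Pm_super _ _ h]; exact ht

lemma Pmt_aligned_pos (ht : 0 < t) {k : ℕ} {r c : Fin k → Fin n}
    (hr : StrictMono r) (hc : StrictMono c)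
    (hal : ∀ j, (r j : ℕ) = (c j : ℕ) ∨ (r j : ℕ) = (c j : ℕ) + 1) :
    0 < (((1 + t • shiftM n)ᵀ).submatrix r c).det := by
  rw [show ((1 + t • shiftM n)ᵀ).submatrix r c = (((1 + t • shiftM n)).submatrix c r)ᵀ from
    (transpose_submatrix _ _ _).symm, det_transpose]
  exact Pm_aligned_pos ht hc hr hal

lemma B_TN (ht : 0 < t) : TotallyNonneg ((1 + t • shiftM n) * (1 + t • shiftM n)ᵀ) :=
  (Pm_TN ht).mul (Pm_TN ht).transpose

lemma Bpow_TN (ht : 0 < t) (m : ℕ) :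
    TotallyNonneg (((1 + t • shiftM n) * (1 + t • shiftM n)ᵀ) ^ (m + 1)) := by
  induction m with
  | zero => simpa [pow_one] using B_TN ht
  | succ m ih =>
    rw [pow_succ]
    exact ih.mul (B_TN ht)

lemma B_base_pos (ht : 0 < t) {k : ℕ} {r c : Fin k → Fin n}
    (hr : StrictMono r) (hc : StrictMono c)
    (hb : ∀ j, (r j : ℕ) ≤ (c j : ℕ) + 1 ∧ (c j : ℕ) ≤ (r j : ℕ) + 1) :
    0 < ((((1 + t • shiftM n) * (1 + t • shiftM n)ᵀ)).submatrix r c).det := by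
  set g : Fin k → Fin n := fun j => ⟨max (r j : ℕ) (c j : ℕ), by
    rcases max_cases (r j : ℕ) (c j : ℕ) with ⟨h, _⟩ | ⟨h, _⟩ <;> rw [h]
    · exact (r j).isLt
    · exact (c j).isLt⟩ with hg
  have hgmono : StrictMono g := by
    intro a b hab
    have h1 : (r a : ℕ) < (r b : ℕ) := coe_strictMono hr hab
    have h2 : (c a : ℕ) < (c b : ℕ) := coe_strictMono hc hab
    rw [Fin.lt_def]
    simp only [hg]
    omega
  have hge := det_submatrix_mul_ge (Pm_TN ht) (Pm_TN ht).transpose hr hc hgmono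
  refine lt_of_lt_of_le (mul_pos ?_ ?_) hge
  · refine Pm_aligned_pos ht hr hgmono fun j => ?_
    have := (hb j).2
    simp only [hg]
    omega
  · refine Pmt_aligned_pos ht hgmono hc fun j => ?_
    have := (hb j).1
    simp only [hg]
    omega

lemma Bpow_pos (ht : 0 < t) (m : ℕ) :
    ∀ (k : ℕ) (r c : Fin k → Fin n), StrictMono r → StrictMono c →
    (∀ j, (r j : ℕ) ≤ (c j : ℕ) + (m + 1) ∧ (c j : ℕ) ≤ (r j : ℕ) + (m + 1)) →
    0 < ((((1 + t • shiftM n) * (1 + t • shiftM n)ᵀ) ^ (m + 1)).submatrix r c).det := by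
  induction m with
  | zero =>
    intro k r c hr hc hb
    rw [pow_one]
    exact B_base_pos ht hr hc hb
  | succ m ih =>
    intro k r c hr hc hb
    set g : Fin k → Fin n := fun j =>
      ⟨max (min (c j : ℕ) ((r j : ℕ) + 1)) ((r j : ℕ) - 1), by
        have h1 := (r j).isLt
        have h2 := (c j).isLt
        omega⟩ with hg
    have hgmono : StrictMono g := by
      intro a b hab
      have h1 : (r a : ℕ) < (r b : ℕ) := coe_strictMono hr hab
      have h2 : (c a : ℕ) < (c b : ℕ) := coe_strictMono hc hab
      rw [Fin.lt_def]
      simp only [hg]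
      omega
    rw [pow_succ']
    have hge := det_submatrix_mul_ge (B_TN ht) (Bpow_TN ht m) hr hc hgmono
    refine lt_of_lt_of_le (mul_pos ?_ ?_) hge
    · refine B_base_pos ht hr hgmono fun j => ?_
      simp only [hg]
      omega
    · refine ih k g c hgmono hc fun j => ?_
      have := hb j
      simp only [hg]
      omega
end PB

lemma A_TN (n : ℕ) : TotallyNonneg (Umat n * (Umat n)ᵀ) :=
  (Umat_TN n).mul (Umat_TN n).transpose

lemma A_principal_pos (n k : ℕ) (r : Fin k → Fin n) (hr : StrictMono r) :
    0 < ((Umat n * (Umat n)ᵀ).submatrix r r).det := by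
  rw [det_submatrix_mul]
  have hterm : ∀ f ∈ monos k n,
      ((Umat n).submatrix r f).det * (((Umat n)ᵀ).submatrix f r).det
        = ((Umat n).submatrix r f).det ^ 2 := by
    intro f _
    rw [show ((Umat n)ᵀ).submatrix f r = ((Umat n).submatrix r f)ᵀ from
      (transpose_submatrix _ _ _).symm, det_transpose, sq]
  rw [Finset.sum_congr rfl hterm]
  have h1 : (1 : ℝ) ≤ ∑ f ∈ monos k n, ((Umat n).submatrix r f).det ^ 2 := by
    have h2 : ((Umat n).submatrix r r).det ^ 2
        ≤ ∑ f ∈ monos k n, ((Umat n).submatrix r f).det ^ 2 :=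
      Finset.single_le_sum (f := fun f => ((Umat n).submatrix r f).det ^ 2)
        (fun g _ => sq_nonneg _) (mem_monos.mpr hr)
    rwa [Umat_principal n k r hr, one_pow] at h2
  linarith

lemma shift_mul_apply {n : ℕ} (M : Matrix (Fin n) (Fin n) ℝ) (i j : Fin n) :
    (shiftM n * M) i j = if h : (i : ℕ) + 1 < n then M ⟨(i : ℕ) + 1, h⟩ j else 0 := by
  rw [mul_apply]
  split
  case isTrue h =>
    rw [Finset.sum_eq_single ⟨(i : ℕ) + 1, h⟩]
    · simp [shiftM]
    · intro b _ hb
      have hb' : (i : ℕ) + 1 ≠ (b : ℕ) := fun hc => hb (Fin.ext hc.symm)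
      simp only [shiftM, Matrix.of_apply]
      rw [if_neg hb', zero_mul]
    · intro habs
      exact absurd (Finset.mem_univ _) habs
  case isFalse h =>
    refine Finset.sum_eq_zero fun b _ => ?_
    have := b.isLt
    simp only [shiftM, Matrix.of_apply]
    rw [if_neg (by omega), zero_mul]

lemma VU_eq_one (n : ℕ) : (1 - shiftM n) * Umat n = 1 := by
  ext i j
  rw [sub_mul, one_mul, Matrix.sub_apply, shift_mul_apply, one_apply]
  by_cases h : (i : ℕ) + 1 < n
  · rw [dif_pos h]
    simp only [Umat, Matrix.of_apply, Fin.ext_iff]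
    split_ifs <;> first | (exfalso; omega) | norm_num
  · rw [dif_neg h]
    simp only [Umat, Matrix.of_apply, Fin.ext_iff]
    have hj := j.isLt
    split_ifs <;> first | (exfalso; omega) | norm_num

lemma inv_eq_UUt (n : ℕ) :
    ((1 - shiftM n)ᵀ * (1 - shiftM n))⁻¹ = Umat n * (Umat n)ᵀ := by
  have hV : (1 - shiftM n)⁻¹ = Umat n := inv_eq_right_inv (VU_eq_one n)
  rw [Matrix.mul_inv_rev, hV, ← Matrix.transpose_nonsing_inv, hV]

/-- for n ≥ 2 there is ε > 0 such that for all 0 < t < ε the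
matrix X(t) = ((I − S)ᵀ·(I − S))⁻¹·((I + t·S)·(I + t·S)ᵀ)^{n−1} is totally
positive. -/
theorem statement_17 (n : ℕ) (hn : 2 ≤ n) :
    ∃ ε : ℝ, 0 < ε ∧ ∀ t : ℝ, 0 < t → t < ε →
      TotallyPos (((1 - shiftM n)ᵀ * (1 - shiftM n))⁻¹ *
        ((1 + t • shiftM n) * (1 + t • shiftM n)ᵀ) ^ (n - 1)) := by
  refine ⟨1, one_pos, fun t ht _ => ?_⟩
  rw [inv_eq_UUt]
  intro k r c hr hc
  obtain ⟨m, hm⟩ : ∃ m, n - 1 = m + 1 := ⟨n - 2, by omega⟩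
  rw [hm]
  have hge := det_submatrix_mul_ge (A_TN n) (Bpow_TN ht m) hr hc hr
  refine lt_of_lt_of_le (mul_pos (A_principal_pos n k r hr) ?_) hge
  refine Bpow_pos ht m k r c hr hc fun j => ?_
  have h1 := (r j).isLt
  have h2 := (c j).isLt
  omega
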